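/- Let V_1, …, V_{n+1} be exchangeable real-valued random variables and let α ∈ (0,1). Then P( V_{n+1} ≤ Quantile(α; {V_1, …, V_n} ∪ {+∞}) ) ≥ ⌈α(n+1)⌉ / (n+1), which is at least α. -/

import Mathlib

open MeasureTheory ProbabilityTheory
open scoped ENNReal

/-- The empirical `α`-quantile of a finite multiset `S` of values in `ℝ ∪ {+∞}`:
the `⌈α · |S|⌉`-th smallest element of `S`, counted with multiplicity. -/
noncomputable def empQuantile (α : ℝ) (S : Multiset (WithTop ℝ)) : WithTop ℝ :=
  (S.sort (· ≤ ·)).getD (⌈α * (S.card : ℝ)⌉.toNat - 1) ⊤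

/-- Random variables `Z 0, …, Z (m-1)` are exchangeable if their joint distribution is
invariant under every permutation of the indices. -/
def Exchangeable {Ω α : Type*} [MeasurableSpace Ω] [MeasurableSpace α]
    (P : Measure Ω) {m : ℕ} (Z : Fin m → Ω → α) : Prop :=
  ∀ σ : Equiv.Perm (Fin m),
    Measure.map (fun ω i => Z (σ i) ω) P = Measure.map (fun ω i => Z i ω) P


open Classical in
lemma sorted_le_getD_iff {β : Type*} [LinearOrder β] (v : β) :
    ∀ (l : List β), l.Pairwise (· ≤ ·) → ∀ (d : β) (k : ℕ), k < l.length →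
      (v ≤ l.getD k d ↔ l.countP (fun s => decide (s < v)) ≤ k) := by
  intro l
  induction l with
  | nil => intro _ d k hk; simp at hk
  | cons a l ih =>
    intro hs d k hk
    have ha : ∀ x ∈ l, a ≤ x := fun x hx => (List.pairwise_cons.1 hs).1 x hx
    have hsl : l.Pairwise (· ≤ ·) := (List.pairwise_cons.1 hs).2
    cases k with
    | zero =>
      simp only [List.getD_cons_zero, List.countP_cons]
      constructor
      · intro hva
        have h1 : l.countP (fun s => decide (s < v)) = 0 := by
          rw [List.countP_eq_zero]
          intro x hx
          simp only [decide_eq_true_eq]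
          exact not_lt.2 (hva.trans (ha x hx))
        simp [h1, not_lt.2 hva]
      · intro h
        by_contra hav
        push_neg at hav
        simp [hav] at h
    | succ k =>
      have hk' : k < l.length := by
        simp only [List.length_cons] at hk; omega
      rw [List.getD_cons_succ, List.countP_cons]
      by_cases hav : a < v
      · rw [ih hsl d k hk']
        simp [hav]
      · have hva : v ≤ a := not_lt.1 hav
        have h0 : l.countP (fun s => decide (s < v)) = 0 := by
          rw [List.countP_eq_zero]
          intro x hx
          simp only [decide_eq_true_eq]
          exact not_lt.2 (hva.trans (ha x hx))
        simp only [hav, decide_eq_true_eq, if_neg, h0]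
        constructor
        · intro _; simp [hav]
        · intro _
          rw [List.getD_eq_getElem l d hk']
          exact hva.trans (ha _ (List.getElem_mem hk'))

lemma rank_count {m k : ℕ} (hk : k ≤ m) (x : Fin m → ℝ) :
    k ≤ (Finset.univ.filter fun j : Fin m =>
      (Finset.univ.filter fun i => x i < x j).card < k).card := by
  set S := Finset.univ.filter fun j : Fin m =>
      (Finset.univ.filter fun i => x i < x j).card < k with hS
  set B := Finset.univ.filter fun j : Fin m =>
      ¬ (Finset.univ.filter fun i => x i < x j).card < k with hB
  by_cases hBne : B.Nonempty
  · obtain ⟨j0, hj0B, hj0min⟩ := B.exists_min_image x hBne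
    have hj0 : ¬ (Finset.univ.filter fun i => x i < x j0).card < k := by
      simpa [hB] using hj0B
    have hsub : (Finset.univ.filter fun i => x i < x j0) ⊆ S := by
      intro i hi
      simp only [Finset.mem_filter, Finset.mem_univ, true_and] at hi
      simp only [hS, Finset.mem_filter, Finset.mem_univ, true_and]
      by_contra hlt
      have : j0 ∈ B := hj0B
      have hiB : i ∈ B := by simp only [hB, Finset.mem_filter, Finset.mem_univ, true_and]; exact hlt
      exact absurd hi (not_lt.2 (hj0min i hiB))
    calc k ≤ (Finset.univ.filter fun i => x i < x j0).card := not_lt.1 hj0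
      _ ≤ S.card := Finset.card_le_card hsub
  · have : S = Finset.univ := by
      rw [Finset.eq_univ_iff_forall]
      intro j
      simp only [hS, Finset.mem_filter, Finset.mem_univ, true_and]
      by_contra hj
      exact hBne ⟨j, by simp only [hB, Finset.mem_filter, Finset.mem_univ, true_and]; exact hj⟩
    rw [this]
    simpa using hk

open Classical in
lemma quantile_iff_rank {n : ℕ} {α : ℝ} (hα : α ∈ Set.Ioo (0:ℝ) 1)
    (v : ℝ) (w : Fin n → ℝ) :
    ((v : WithTop ℝ) ≤ empQuantile α
        ((⊤ : WithTop ℝ) ::ₘ ((Finset.univ : Finset (Fin n)).val.map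
          fun i => ((w i : ℝ) : WithTop ℝ))) ↔
      (Finset.univ.filter fun i => w i < v).card < ⌈α * ((n : ℝ) + 1)⌉.toNat) := by
  set S : Multiset (WithTop ℝ) :=
    (⊤ : WithTop ℝ) ::ₘ ((Finset.univ : Finset (Fin n)).val.map
          fun i => ((w i : ℝ) : WithTop ℝ)) with hSdef
  set k : ℕ := ⌈α * ((n : ℝ) + 1)⌉.toNat with hk
  have hcard : Multiset.card S = n + 1 := by
    simp [hSdef, add_comm]
  have hcardR : ((Multiset.card S : ℕ) : ℝ) = (n : ℝ) + 1 := by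
    rw [hcard]; push_cast; ring
  have hk1 : 1 ≤ k := by
    have h0 : (0:ℤ) < ⌈α * ((n : ℝ) + 1)⌉ := by
      apply Int.ceil_pos.2
      have : (0:ℝ) < (n:ℝ) + 1 := by positivity
      exact mul_pos hα.1 this
    omega
  have hkn : k ≤ n + 1 := by
    have h1 : ⌈α * ((n : ℝ) + 1)⌉ ≤ ((n:ℤ) + 1) := by
      apply Int.ceil_le.2
      have hn1 : (0:ℝ) < (n:ℝ) + 1 := by positivity
      push_cast
      nlinarith [hα.2.le]
    omega
  have hlen : k - 1 < (S.sort (· ≤ ·)).length := by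
    rw [Multiset.length_sort, hcard]; omega
  have key := sorted_le_getD_iff ((v : ℝ) : WithTop ℝ) (S.sort (· ≤ ·))
    (Multiset.pairwise_sort _ _) ⊤ (k - 1) hlen
  rw [empQuantile, hcardR, ← hk]
  rw [key]
  have hcount : (S.sort (· ≤ ·)).countP
      (fun s => decide (s < ((v:ℝ) : WithTop ℝ)))
      = (Finset.univ.filter fun i => w i < v).card := by
    have h1 : (S.sort (· ≤ ·)).countP (fun s => decide (s < ((v:ℝ) : WithTop ℝ)))
        = Multiset.countP (fun s => s < ((v:ℝ) : WithTop ℝ)) S := by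
      rw [← Multiset.sort_eq S (· ≤ ·), Multiset.coe_countP, Multiset.sort_eq]
    rw [h1, hSdef, Multiset.countP_cons, Multiset.countP_map]
    have h2 : ¬ ((⊤ : WithTop ℝ) < ((v:ℝ) : WithTop ℝ)) := not_top_lt
    rw [if_neg h2, add_zero]
    have h4 : Multiset.filter (fun a : Fin n => ((w a : ℝ) : WithTop ℝ) < ((v:ℝ) : WithTop ℝ))
        Finset.univ.val = Multiset.filter (fun a => w a < v) Finset.univ.val :=
      Multiset.filter_congr (fun x _ => by simp [WithTop.coe_lt_coe])
    rw [h4, ← Finset.filter_val]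
    rfl
  rw [hcount]
  omega

/-- If `V 0, …, V n` are exchangeable real random variables and `α ∈ (0,1)`, then
`P(V_{n+1} ≤ Quantile(α; {V_1, …, V_n} ∪ {+∞})) ≥ ⌈α(n+1)⌉/(n+1) ≥ α`. -/
theorem conformal_quantile_coverage_sharp
    {Ω : Type*} [MeasurableSpace Ω] (P : Measure Ω) [IsProbabilityMeasure P]
    {n : ℕ} (V : Fin (n + 1) → Ω → ℝ) (hVmeas : ∀ i, Measurable (V i))
    (hexch : Exchangeable P V)
    (α : ℝ) (hα : α ∈ Set.Ioo (0 : ℝ) 1) :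
    ENNReal.ofReal ((⌈α * ((n : ℝ) + 1)⌉ : ℝ) / ((n : ℝ) + 1)) ≤
      P {ω | ((V (Fin.last n) ω : ℝ) : WithTop ℝ) ≤
        empQuantile α
          ((⊤ : WithTop ℝ) ::ₘ
            ((Finset.univ : Finset (Fin n)).val.map
              fun i => ((V i.castSucc ω : ℝ) : WithTop ℝ)))} ∧
    α ≤ (⌈α * ((n : ℝ) + 1)⌉ : ℝ) / ((n : ℝ) + 1) := by
  classical
  obtain ⟨hα0, hα1⟩ := hα
  have hn1 : (0:ℝ) < (n:ℝ) + 1 := by positivity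
  set k : ℕ := ⌈α * ((n : ℝ) + 1)⌉.toNat with hkdef
  have hceil_pos : (0:ℤ) < ⌈α * ((n : ℝ) + 1)⌉ := Int.ceil_pos.2 (mul_pos hα0 hn1)
  have hk1 : 1 ≤ k := by omega
  have hkn : k ≤ n + 1 := by
    have h1 : ⌈α * ((n : ℝ) + 1)⌉ ≤ ((n:ℤ) + 1) := by
      apply Int.ceil_le.2
      push_cast
      nlinarith
    omega
  -- the joint random vector
  set VV : Ω → (Fin (n+1) → ℝ) := fun ω i => V i ω with hVVdef
  have hVV : Measurable VV := measurable_pi_lambda _ hVmeas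
  -- rank sets
  set T : Fin (n+1) → Set (Fin (n+1) → ℝ) := fun j =>
    {x | (Finset.univ.filter fun i => x i < x j).card < k} with hTdef
  have hrmeas : ∀ j : Fin (n+1),
      Measurable (fun x : Fin (n+1) → ℝ =>
        (Finset.univ.filter fun i => x i < x j).card) := by
    intro j
    simp_rw [Finset.card_filter]
    apply Finset.measurable_sum
    intro i _
    exact Measurable.ite
      (measurableSet_lt (measurable_pi_apply i) (measurable_pi_apply j))
      measurable_const measurable_const
  have hT : ∀ j, MeasurableSet (T j) := by
    intro j
    exact (hrmeas j) (by trivial : MeasurableSet (Set.Iio k))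
  set A : Fin (n+1) → Set Ω := fun j => VV ⁻¹' T j with hAdef
  have hA : ∀ j, MeasurableSet (A j) := fun j => hVV (hT j)
  -- exchangeability: all A j have the same probability
  have hswap : ∀ j, P (A j) = P (A (Fin.last n)) := by
    intro j
    set σ : Equiv.Perm (Fin (n+1)) := Equiv.swap j (Fin.last n) with hσ
    set g : (Fin (n+1) → ℝ) → (Fin (n+1) → ℝ) := fun x => x ∘ σ with hg
    have hgm : Measurable g := measurable_pi_lambda _ (fun i => measurable_pi_apply _)
    have hTg : T j = g ⁻¹' T (Fin.last n) := by
      ext x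
      simp only [hTdef, hg, Set.mem_preimage, Set.mem_setOf_eq, Function.comp]
      have hσlast : σ (Fin.last n) = j := Equiv.swap_apply_right _ _
      have hcardeq : (Finset.univ.filter fun i => x (σ i) < x (σ (Fin.last n))).card
          = (Finset.univ.filter fun i => x i < x j).card := by
        rw [hσlast]
        have : (Finset.univ.filter fun i => x (σ i) < x j)
            = (Finset.univ.filter fun i => x i < x j).map σ.symm.toEmbedding := by
          ext i
          simp only [Finset.mem_map, Finset.mem_filter, Finset.mem_univ, true_and,
            Equiv.coe_toEmbedding]
          constructor
          · intro h
            exact ⟨σ i, h, σ.symm_apply_apply i⟩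
          · rintro ⟨a, ha, rfl⟩
            simpa [σ.apply_symm_apply] using ha
        rw [this, Finset.card_map]
      rw [hcardeq]
    have hcomp : (fun ω i => V (σ i) ω) = g ∘ VV := rfl
    calc P (A j) = P ((g ∘ VV) ⁻¹' T (Fin.last n)) := by
          rw [hAdef]; rw [Set.preimage_comp, ← hTg]
      _ = Measure.map (g ∘ VV) P (T (Fin.last n)) :=
          (Measure.map_apply (hgm.comp hVV) (hT _)).symm
      _ = Measure.map VV P (T (Fin.last n)) := by
          rw [← hcomp, hexch σ]
      _ = P (A (Fin.last n)) := Measure.map_apply hVV (hT _)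
  -- pointwise counting bound
  have hpoint : ∀ ω, (k : ℝ≥0∞) ≤ ∑ j, (A j).indicator (fun _ => (1:ℝ≥0∞)) ω := by
    intro ω
    have hsum : ∑ j, (A j).indicator (fun _ => (1:ℝ≥0∞)) ω
        = ((Finset.univ.filter fun j => ω ∈ A j).card : ℝ≥0∞) := by
      rw [← Finset.sum_boole]
      congr 1
    rw [hsum]
    have hmem : ∀ j, (ω ∈ A j) =
        ((Finset.univ.filter fun i => VV ω i < VV ω j).card < k) := fun j => rfl
    have := rank_count (k := k) hkn (VV ω)
    refine Nat.cast_le.2 (le_trans this (Finset.card_le_card ?_))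
    intro j hj
    simp only [Finset.mem_filter, Finset.mem_univ, true_and] at hj ⊢
    exact hj
  -- sum of measures bound
  have hsumP : (k : ℝ≥0∞) ≤ ∑ j, P (A j) := by
    have h1 : ∀ j : Fin (n+1), P (A j)
        = ∫⁻ ω, (A j).indicator (fun _ => (1:ℝ≥0∞)) ω ∂P := by
      intro j
      rw [lintegral_indicator (hA j)]
      simp
    calc (k : ℝ≥0∞) = ∫⁻ _, (k : ℝ≥0∞) ∂P := by simp
      _ ≤ ∫⁻ ω, ∑ j, (A j).indicator (fun _ => (1:ℝ≥0∞)) ω ∂P :=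
          lintegral_mono hpoint
      _ = ∑ j, ∫⁻ ω, (A j).indicator (fun _ => (1:ℝ≥0∞)) ω ∂P :=
          lintegral_finset_sum _ (fun j _ => measurable_const.indicator (hA j))
      _ = ∑ j, P (A j) := by simp_rw [← h1]
  have hsumP' : (k : ℝ≥0∞) ≤ ((n:ℝ≥0∞) + 1) * P (A (Fin.last n)) := by
    calc (k : ℝ≥0∞) ≤ ∑ j, P (A j) := hsumP
      _ = ∑ _j : Fin (n+1), P (A (Fin.last n)) := by
          exact Finset.sum_congr rfl (fun j _ => hswap j)
      _ = ((n:ℝ≥0∞) + 1) * P (A (Fin.last n)) := by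
          rw [Finset.sum_const, Finset.card_univ, Fintype.card_fin, nsmul_eq_mul]
          push_cast
          ring
  -- identify the event with A (last n)
  have hevent : {ω | ((V (Fin.last n) ω : ℝ) : WithTop ℝ) ≤
        empQuantile α
          ((⊤ : WithTop ℝ) ::ₘ
            ((Finset.univ : Finset (Fin n)).val.map
              fun i => ((V i.castSucc ω : ℝ) : WithTop ℝ)))} = A (Fin.last n) := by
    ext ω
    rw [Set.mem_setOf_eq, quantile_iff_rank ⟨hα0, hα1⟩ (V (Fin.last n) ω)
      (fun i => V i.castSucc ω)]
    simp only [hAdef, hTdef, Set.mem_preimage, Set.mem_setOf_eq]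
    have hcards : (Finset.univ.filter fun i : Fin (n+1) => VV ω i < VV ω (Fin.last n)).card
        = (Finset.univ.filter fun i : Fin n => V i.castSucc ω < V (Fin.last n) ω).card := by
      rw [Finset.card_filter, Finset.card_filter, Fin.sum_univ_castSucc]
      simp [hVVdef]
    rw [hcards]
  constructor
  · -- main bound
    have hofReal : ENNReal.ofReal ((⌈α * ((n : ℝ) + 1)⌉ : ℝ) / ((n : ℝ) + 1))
        = (k : ℝ≥0∞) / ((n:ℝ≥0∞) + 1) := by
      have hceilR : ((⌈α * ((n : ℝ) + 1)⌉ : ℤ) : ℝ) = (k : ℝ) := by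
        have h := Int.toNat_of_nonneg hceil_pos.le
        rw [hkdef]
        exact_mod_cast h.symm
      rw [hceilR, ENNReal.ofReal_div_of_pos hn1]
      congr 1
      · exact ENNReal.ofReal_natCast k
      · rw [← Nat.cast_one, ← Nat.cast_add, ENNReal.ofReal_natCast]
        push_cast
        ring
    rw [hofReal, hevent]
    rw [ENNReal.div_le_iff (by simp) (by simp)]
    rw [mul_comm]
    exact hsumP'
  · -- second bound
    rw [le_div_iff₀ hn1]
    exact Int.le_ceil _
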